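/- Let K be a field and consider the equation (1 - x_0)u = (1 - x_1)v in the monoid ring K[M] of Thompson's monoid. Define u_0 = (1 + x_0 - x_1)(1 - x_3) and u_k = (1 - x_1)φ(u_{k-1}) for k ≥ 1, where φ is the shift endomorphism. Then for any solution (u, v) in K[M], the element u can be written as u = u_0 r_0 + u_1 r_1 + ... + u_k r_k for some k and some r_i ∈ K[M_i] (0 ≤ i ≤ k). -/

import Mathlib

/-- The defining relation of Thompson's monoid: `x_j x_i = x_i x_{j+1}` for `i < j`. -/
def thompsonRel : FreeMonoid ℕ → FreeMonoid ℕ → Prop := fun a b =>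
  ∃ i j : ℕ, i < j ∧ a = FreeMonoid.of j * FreeMonoid.of i ∧
    b = FreeMonoid.of i * FreeMonoid.of (j + 1)

/-- The congruence on the free monoid generated by the Thompson relations. -/
def thompsonCon : Con (FreeMonoid ℕ) := conGen thompsonRel

/-- Thompson's monoid `M`. -/
abbrev ThompsonM := thompsonCon.Quotient

/-- The generators `x_n` of Thompson's monoid. -/
def xM (n : ℕ) : ThompsonM := thompsonCon.mk' (FreeMonoid.of n)

/-- The shift endomorphism `φ : M → M`, `x_i ↦ x_{i+1}`. -/
def shiftM : ThompsonM →* ThompsonM :=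
  Con.lift _ ((Con.mk' thompsonCon).comp (FreeMonoid.map Nat.succ)) (by
    apply Con.conGen_le.2
    rintro a b ⟨i, j, hij, rfl, rfl⟩
    simp only [Con.ker_rel, MonoidHom.comp_apply, map_mul, FreeMonoid.map_of]
    exact Con.eq _ |>.2 (ConGen.Rel.of _ _ ⟨i + 1, j + 1, by omega, rfl, rfl⟩))

/-- The relators of Thompson's group `F` (infinite presentation). -/
def thompsonRels : Set (FreeGroup ℕ) :=
  {w | ∃ i j : ℕ, i < j ∧
    w = FreeGroup.of j * FreeGroup.of i * (FreeGroup.of i * FreeGroup.of (j + 1))⁻¹}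

/-- Thompson's group `F`. -/
abbrev ThompsonF := PresentedGroup thompsonRels

/-- The generators `x_n` of Thompson's group. -/
def xF (n : ℕ) : ThompsonF := PresentedGroup.of n

/-- Word length, as a monoid homomorphism on the free monoid. -/
def lenHom : FreeMonoid ℕ →* Multiplicative ℕ where
  toFun w := Multiplicative.ofAdd w.length
  map_one' := by simp
  map_mul' a b := by
    simp [FreeMonoid.length_mul, ofAdd_add]

/-- Length is well defined on Thompson's monoid. -/
def lenM : ThompsonM →* Multiplicative ℕ :=
  Con.lift _ lenHom (by
    apply Con.conGen_le.2
    rintro a b ⟨i, j, hij, rfl, rfl⟩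
    simp only [Con.ker_rel]
    show Multiplicative.ofAdd (FreeMonoid.of j * FreeMonoid.of i).length = Multiplicative.ofAdd (FreeMonoid.of i * FreeMonoid.of (j + 1)).length
    simp [FreeMonoid.length_mul])

/-- The length of an element of Thompson's monoid. -/
def mlen (g : ThompsonM) : ℕ := Multiplicative.toAdd (lenM g)

/-- The degree of an element of the monoid ring `K[M]`. -/
noncomputable def mdeg {K : Type*} [Field K] (a : MonoidAlgebra K ThompsonM) : ℕ :=
  a.coeff.support.sup mlen

/-- The submonoid `M_i` of `M` generated by `x_i, x_{i+1}, …`. -/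
def Msub (i : ℕ) : Submonoid ThompsonM :=
  Submonoid.closure {g | ∃ n : ℕ, i ≤ n ∧ g = xM n}

/-- The shift endomorphism of the monoid ring `K[M]` induced by `φ`. -/
noncomputable def shiftA (K : Type*) [Field K] :
    MonoidAlgebra K ThompsonM →+* MonoidAlgebra K ThompsonM :=
  MonoidAlgebra.mapDomainRingHom K shiftM

/-- The natural homomorphism of Thompson's monoid into Thompson's group. -/
def iotaMF : ThompsonM →* ThompsonF :=
  Con.lift _ (FreeMonoid.lift xF) (by
    apply Con.conGen_le.2
    rintro a b ⟨i, j, hij, rfl, rfl⟩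
    simp only [Con.ker_rel, map_mul, FreeMonoid.lift_eval_of]
    have h : (FreeGroup.of j * FreeGroup.of i *
        (FreeGroup.of i * FreeGroup.of (j + 1))⁻¹ : FreeGroup ℕ) ∈ thompsonRels :=
      ⟨i, j, hij, rfl⟩
    have h1 : PresentedGroup.mk thompsonRels
        (FreeGroup.of j * FreeGroup.of i * (FreeGroup.of i * FreeGroup.of (j + 1))⁻¹) = 1 := by
      exact (QuotientGroup.eq_one_iff _).2 (Subgroup.subset_normalClosure h)
    have := h1
    rw [map_mul, map_mul, map_inv, map_mul, mul_inv_eq_one] at this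
    simpa [xF, PresentedGroup.of] using this)

/-- The generator `x_n` as an element of the group ring `K[F]`. -/
noncomputable def XF (K : Type*) [Field K] (n : ℕ) : MonoidAlgebra K ThompsonF :=
  MonoidAlgebra.of K ThompsonF (xF n)

/-- The generator `x_n` as an element of the monoid ring `K[M]`. -/
noncomputable def XMa (K : Type*) [Field K] (n : ℕ) : MonoidAlgebra K ThompsonM :=
  MonoidAlgebra.of K ThompsonM (xM n)


namespace ThompsonAux

/-- Insert a generator index `b` at the left of a normal word. -/
def ins : ℕ → List ℕ → List ℕ
  | b, [] => [b]
  | b, c :: t => if b ≤ c then b :: c :: t else c :: ins (b+1) t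

@[simp] lemma ins_nil (b : ℕ) : ins b [] = [b] := rfl

lemma ins_cons (b c : ℕ) (t : List ℕ) :
    ins b (c :: t) = if b ≤ c then b :: c :: t else c :: ins (b+1) t := rfl

lemma ins_of_le {b c : ℕ} (h : b ≤ c) (t : List ℕ) : ins b (c :: t) = b :: c :: t := by
  simp [ins_cons, h]

lemma ins_of_gt {b c : ℕ} (h : c < b) (t : List ℕ) : ins b (c :: t) = c :: ins (b+1) t := by
  simp [ins_cons, Nat.not_le.2 h]

@[simp] lemma ins_length (b : ℕ) (w : List ℕ) : (ins b w).length = w.length + 1 := by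
  induction w generalizing b with
  | nil => rfl
  | cons c t ih => by_cases h : b ≤ c <;> simp [ins_cons, h, ih]

lemma ins_braid {a b : ℕ} (h : a < b) (w : List ℕ) :
    ins b (ins a w) = ins a (ins (b+1) w) := by
  induction w generalizing a b with
  | nil =>
    rw [ins_nil, ins_nil, ins_of_gt h, ins_of_le (by omega), ins_nil]
  | cons c t ih =>
    by_cases hac : a ≤ c
    · rw [ins_of_le hac, ins_of_gt h]
      by_cases hbc : b + 1 ≤ c
      · rw [ins_of_le hbc, ins_of_le (by omega)]
      · rw [ins_of_gt (by omega), ins_of_le hac]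
    · rw [ins_of_gt (by omega), ins_of_gt (by omega), ins_of_gt (by omega),
        ins_of_gt (by omega), ih (by omega)]

lemma mem_ins {x b : ℕ} {w : List ℕ} (hx : x ∈ ins b w) : b ≤ x ∨ x ∈ w := by
  induction w generalizing b with
  | nil => left; simp [ins_nil] at hx; omega
  | cons c t ih =>
    by_cases h : b ≤ c
    · rw [ins_of_le h] at hx
      rcases List.mem_cons.1 hx with rfl | hx
      · left; omega
      · right; exact hx
    · rw [ins_of_gt (by omega)] at hx
      rcases List.mem_cons.1 hx with rfl | hx
      · right; simp
      · rcases ih hx with h1 | h1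
        · left; omega
        · right; exact List.mem_cons_of_mem _ h1

lemma ins_sorted {w : List ℕ} (hw : w.Pairwise (· ≤ ·)) (b : ℕ) : (ins b w).Pairwise (· ≤ ·) := by
  induction w generalizing b with
  | nil => simp
  | cons c t ih =>
    rcases List.pairwise_cons.1 hw with ⟨hc, ht⟩
    by_cases h : b ≤ c
    · rw [ins_of_le h]
      refine List.pairwise_cons.2 ⟨?_, hw⟩
      intro x hx
      rcases List.mem_cons.1 hx with rfl | hx
      · exact h
      · exact le_trans h (hc x hx)
    · rw [ins_of_gt (by omega)]
      refine List.pairwise_cons.2 ⟨?_, ih ht (b+1)⟩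
      intro x hx
      rcases mem_ins hx with h1 | h1
      · omega
      · exact hc x h1

lemma ins_of_sorted_cons {b : ℕ} {w : List ℕ} (h : (b :: w).Pairwise (· ≤ ·)) :
    ins b w = b :: w := by
  cases w with
  | nil => rfl
  | cons c t =>
    have := (List.pairwise_cons.1 h).1 c (by simp)
    exact ins_of_le this t

lemma ins_map_succ (b : ℕ) (w : List ℕ) :
    ins (b+1) (w.map Nat.succ) = (ins b w).map Nat.succ := by
  induction w generalizing b with
  | nil => rfl
  | cons c t ih =>
    by_cases h : b ≤ c
    · rw [List.map_cons, ins_of_le (by omega), ins_of_le h]; rfl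
    · rw [List.map_cons, ins_of_gt (by omega), ins_of_gt (by omega), List.map_cons, ih]

lemma ins_injective {b : ℕ} : ∀ {w w' : List ℕ}, ins b w = ins b w' → w = w' := by
  suffices H : ∀ (w : List ℕ) (b : ℕ) (w' : List ℕ), ins b w = ins b w' → w = w' by
    intro w w' h; exact H w b w' h
  intro w
  induction w with
  | nil =>
    intro b w' hw
    cases w' with
    | nil => rfl
    | cons c t => exfalso; have := congrArg List.length hw; simp at this
  | cons c t ih =>
    intro b w' hw
    cases w' with
    | nil => exfalso; have := congrArg List.length hw; simp at this
    | cons c' t' =>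
      by_cases h1 : b ≤ c <;> by_cases h2 : b ≤ c'
      · rw [ins_of_le h1, ins_of_le h2] at hw; simpa using hw
      · rw [ins_of_le h1, ins_of_gt (by omega)] at hw
        have h3 := (List.cons_eq_cons.1 hw).1
        omega
      · rw [ins_of_gt (by omega), ins_of_le h2] at hw
        have h3 := (List.cons_eq_cons.1 hw).1
        omega
      · rw [ins_of_gt (by omega), ins_of_gt (by omega)] at hw
        obtain ⟨rfl, h⟩ := List.cons_eq_cons.1 hw
        exact congrArg (c :: ·) (ih (b+1) t' h)

end ThompsonAux
namespace ThompsonAux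

open FreeMonoid

/-- The defining relation inside `ThompsonM`. -/
lemma xM_rel {a b : ℕ} (h : a < b) : xM b * xM a = xM a * xM (b + 1) := by
  have h2 : (thompsonCon.mk' (FreeMonoid.of b * FreeMonoid.of a) : ThompsonM) =
      thompsonCon.mk' (FreeMonoid.of a * FreeMonoid.of (b + 1)) :=
    (Con.eq _).2 (ConGen.Rel.of _ _ ⟨a, b, h, rfl, rfl⟩)
  rw [map_mul, map_mul] at h2
  exact h2

/-- Action of `ThompsonM` on lists by normal-form insertion. -/
def act : ThompsonM →* Function.End (List ℕ) :=
  Con.lift _ (FreeMonoid.lift fun b => (ins b : Function.End (List ℕ))) (by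
    apply Con.conGen_le.2
    rintro a b ⟨i, j, hij, rfl, rfl⟩
    simp only [Con.ker_rel, map_mul, FreeMonoid.lift_eval_of]
    funext w
    exact ins_braid hij w)

/-- The normal form of an element of Thompson's monoid. -/
def nf (m : ThompsonM) : List ℕ := act m []

def toM (l : List ℕ) : ThompsonM := thompsonCon.mk' (FreeMonoid.ofList l)

@[simp] lemma toM_nil : toM [] = 1 := map_one _

@[simp] lemma toM_cons (a : ℕ) (t : List ℕ) : toM (a :: t) = xM a * toM t := by
  rw [toM, FreeMonoid.ofList_cons, map_mul]; rfl

lemma toM_append (l1 l2 : List ℕ) : toM (l1 ++ l2) = toM l1 * toM l2 := by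
  rw [toM, FreeMonoid.ofList_append, map_mul]; rfl

@[simp] lemma nf_one : nf 1 = [] := by
  show act 1 [] = []
  rw [map_one]; rfl

lemma act_xM (b : ℕ) : act (xM b) = (ins b : Function.End (List ℕ)) := by
  show Con.lift _ _ _ (thompsonCon.mk' (FreeMonoid.of b)) = _
  exact FreeMonoid.lift_eval_of _ b

lemma nf_xM_mul (b : ℕ) (m : ThompsonM) : nf (xM b * m) = ins b (nf m) := by
  show act (xM b * m) [] = _
  rw [map_mul, act_xM]; rfl

lemma toM_ins (b : ℕ) (w : List ℕ) : toM (ins b w) = xM b * toM w := by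
  induction w generalizing b with
  | nil => simp
  | cons c t ih =>
    by_cases h : b ≤ c
    · rw [ins_of_le h]; simp
    · rw [ins_of_gt (by omega), toM_cons, ih, toM_cons, ← mul_assoc, ← mul_assoc,
        xM_rel (show c < b by omega)]

lemma toM_nf (m : ThompsonM) : toM (nf m) = m := by
  induction m using Con.induction_on with
  | _ w =>
    induction w using FreeMonoid.recOn with
    | one =>
      show toM (nf 1) = 1
      simp
    | of_mul b xs ih =>
      have : ((FreeMonoid.of b * xs : FreeMonoid ℕ) : ThompsonM) = xM b * (xs : ThompsonM) := rfl
      rw [this, nf_xM_mul, toM_ins, ih]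

lemma nf_sorted (m : ThompsonM) : (nf m).Pairwise (· ≤ ·) := by
  induction m using Con.induction_on with
  | _ w =>
    induction w using FreeMonoid.recOn with
    | one => show (nf 1).Pairwise (· ≤ ·); simp
    | of_mul b xs ih =>
      have : ((FreeMonoid.of b * xs : FreeMonoid ℕ) : ThompsonM) = xM b * (xs : ThompsonM) := rfl
      rw [this, nf_xM_mul]
      exact ins_sorted ih b

lemma nf_toM_of_sorted {w : List ℕ} (hw : w.Pairwise (· ≤ ·)) : nf (toM w) = w := by
  induction w with
  | nil => simp
  | cons a t ih =>
    rw [toM_cons, nf_xM_mul, ih (List.pairwise_cons.1 hw).2, ins_of_sorted_cons hw]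

lemma toM_injOn : ∀ {w w' : List ℕ}, w.Pairwise (· ≤ ·) → w'.Pairwise (· ≤ ·) →
    toM w = toM w' → w = w' := by
  intro w w' hw hw' h
  rw [← nf_toM_of_sorted hw, ← nf_toM_of_sorted hw', h]

@[simp] lemma shiftM_xM (b : ℕ) : shiftM (xM b) = xM (b + 1) := by
  show Con.lift _ _ _ (thompsonCon.mk' (FreeMonoid.of b)) = _
  rfl

lemma toM_map_succ (l : List ℕ) : toM (l.map Nat.succ) = shiftM (toM l) := by
  induction l with
  | nil => simp
  | cons a t ih => rw [List.map_cons, toM_cons, toM_cons, map_mul, shiftM_xM, ih]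

lemma nf_shiftM (m : ThompsonM) : nf (shiftM m) = (nf m).map Nat.succ := by
  induction m using Con.induction_on with
  | _ w =>
    induction w using FreeMonoid.recOn with
    | one =>
      show nf (shiftM 1) = (nf 1).map Nat.succ
      rw [map_one]; simp
    | of_mul b xs ih =>
      have : ((FreeMonoid.of b * xs : FreeMonoid ℕ) : ThompsonM) = xM b * (xs : ThompsonM) := rfl
      rw [this, map_mul, shiftM_xM, nf_xM_mul, nf_xM_mul, ih, ins_map_succ]

lemma ins_zero (l : List ℕ) : ins 0 l = 0 :: l := by
  cases l with
  | nil => rfl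
  | cons c t => exact ins_of_le (Nat.zero_le c) t

lemma nf_x0_pow_shift (a : ℕ) (p : ThompsonM) :
    nf (xM 0 ^ a * shiftM p) = List.replicate a 0 ++ (nf p).map Nat.succ := by
  induction a with
  | zero => rw [pow_zero, one_mul, nf_shiftM]; rfl
  | succ n ih =>
    rw [pow_succ', mul_assoc, nf_xM_mul, ih, ins_zero]
    rfl

/-- `mlen` of `toM`. -/
lemma mlen_toM (l : List ℕ) : mlen (toM l) = l.length := by
  induction l with
  | nil => simp [mlen, toM_nil, lenM]
  | cons a t ih =>
    rw [toM_cons, mlen, map_mul]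
    show Multiplicative.toAdd (lenM (xM a) * lenM (toM t)) = _
    rw [toAdd_mul]
    have : Multiplicative.toAdd (lenM (xM a)) = 1 := rfl
    rw [this]
    show 1 + mlen (toM t) = _
    rw [ih, List.length_cons]
    omega

lemma mlen_eq_nf_length (m : ThompsonM) : mlen m = (nf m).length := by
  conv_lhs => rw [← toM_nf m]
  rw [mlen_toM]

lemma mlen_mul (a b : ThompsonM) : mlen (a * b) = mlen a + mlen b := by
  rw [mlen, map_mul, toAdd_mul]; rfl

lemma mlen_xM (b : ℕ) : mlen (xM b) = 1 := rfl

end ThompsonAux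
namespace ThompsonAux

/-- Number of leading zeros of the normal form. -/
def zcount (m : ThompsonM) : ℕ := ((nf m).takeWhile (· == 0)).length

/-- The shifted-down remainder after removing leading zeros. -/
def rest (m : ThompsonM) : ThompsonM := toM (((nf m).dropWhile (· == 0)).map Nat.pred)

lemma takeWhile_rep_app (a : ℕ) (l : List ℕ) :
    (List.replicate a 0 ++ l.map Nat.succ).takeWhile (· == 0) = List.replicate a 0 := by
  induction a with
  | zero =>
    simp only [List.replicate, List.nil_append]
    cases l with
    | nil => rfl
    | cons c t => simp [List.takeWhile_cons]
  | succ n ih => simp [List.replicate_succ, List.takeWhile_cons, ih]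

lemma dropWhile_rep_app (a : ℕ) (l : List ℕ) :
    (List.replicate a 0 ++ l.map Nat.succ).dropWhile (· == 0) = l.map Nat.succ := by
  induction a with
  | zero =>
    simp only [List.replicate, List.nil_append]
    cases l with
    | nil => rfl
    | cons c t => simp [List.dropWhile_cons]
  | succ n ih => simp [List.replicate_succ, List.dropWhile_cons, ih]

lemma zcount_mk (a : ℕ) (p : ThompsonM) : zcount (xM 0 ^ a * shiftM p) = a := by
  rw [zcount, nf_x0_pow_shift, takeWhile_rep_app, List.length_replicate]

lemma rest_mk (a : ℕ) (p : ThompsonM) : rest (xM 0 ^ a * shiftM p) = p := by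
  rw [rest, nf_x0_pow_shift, dropWhile_rep_app, List.map_map]
  have : (Nat.pred ∘ Nat.succ) = id := by funext x; simp
  rw [this, List.map_id, toM_nf]

lemma takeWhile_zero_eq_replicate (l : List ℕ) :
    l.takeWhile (· == 0) = List.replicate (l.takeWhile (· == 0)).length 0 := by
  apply List.eq_replicate_of_mem
  intro b hb
  have := List.mem_takeWhile_imp hb
  simpa using this

lemma toM_replicate_zero (a : ℕ) : toM (List.replicate a 0) = xM 0 ^ a := by
  induction a with
  | zero => simp
  | succ n ih => rw [List.replicate_succ, toM_cons, ih, pow_succ']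

lemma dropWhile_zero_pos {l : List ℕ} (hl : l.Pairwise (· ≤ ·)) :
    ∀ x ∈ l.dropWhile (· == 0), x ≠ 0 := by
  induction l with
  | nil => simp
  | cons c t ih =>
    rcases List.pairwise_cons.1 hl with ⟨hc, ht⟩
    by_cases h : c = 0
    · subst h
      rw [List.dropWhile_cons]
      simpa using ih ht
    · rw [List.dropWhile_cons, if_neg (by simpa using h)]
      intro x hx
      rcases List.mem_cons.1 hx with rfl | hx
      · exact h
      · have := hc x hx
        omega

lemma decomp (m : ThompsonM) : xM 0 ^ zcount m * shiftM (rest m) = m := by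
  have hs := nf_sorted m
  set tw := (nf m).takeWhile (· == 0) with htw
  set dw := (nf m).dropWhile (· == 0) with hdw
  have hnz : ∀ x ∈ dw, x ≠ 0 := dropWhile_zero_pos hs
  have hmapped : (dw.map Nat.pred).map Nat.succ = dw := by
    rw [List.map_map]
    conv_rhs => rw [← List.map_id dw]
    apply List.map_congr_left
    intro x hx
    have := hnz x hx
    simp; omega
  rw [rest, ← toM_map_succ, hmapped, zcount, ← toM_replicate_zero,
    ← takeWhile_zero_eq_replicate, ← toM_append]
  rw [hdw, List.takeWhile_append_dropWhile, toM_nf]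

lemma zcount_add_mlen_rest (m : ThompsonM) : zcount m + mlen (rest m) = mlen m := by
  rw [rest, mlen_toM, List.length_map, zcount, mlen_eq_nf_length]
  conv_rhs => rw [← List.takeWhile_append_dropWhile (p := (· == 0)) (l := nf m)]
  rw [List.length_append]

lemma zcount_le_mlen (m : ThompsonM) : zcount m ≤ mlen m := by
  have := zcount_add_mlen_rest m; omega

lemma zcount_x0_mul (m : ThompsonM) : zcount (xM 0 * m) = zcount m + 1 := by
  conv_lhs => rw [← decomp m, ← mul_assoc, ← pow_succ']
  rw [zcount_mk]

lemma rest_x0_mul (m : ThompsonM) : rest (xM 0 * m) = rest m := by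
  conv_lhs => rw [← decomp m, ← mul_assoc, ← pow_succ']
  rw [rest_mk]

lemma xk_x0pow (k z : ℕ) (hk : 1 ≤ k) : xM k * xM 0 ^ z = xM 0 ^ z * xM (k + z) := by
  induction z generalizing k with
  | zero => simp
  | succ n ih =>
    rw [pow_succ', ← mul_assoc, xM_rel (show 0 < k by omega), mul_assoc,
      ih (k+1) (by omega), ← mul_assoc, ← pow_succ']
    have h2 : k + 1 + n = k + (n + 1) := by omega
    rw [h2]

lemma x1_x0pow (z : ℕ) : xM 1 * xM 0 ^ z = xM 0 ^ z * xM (z + 1) := by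
  rw [xk_x0pow 1 z (by omega)]
  have h2 : 1 + z = z + 1 := by omega
  rw [h2]

lemma x1_mul_decomp (m : ThompsonM) :
    xM 1 * m = xM 0 ^ zcount m * shiftM (xM (zcount m) * rest m) := by
  conv_lhs => rw [← decomp m]
  rw [← mul_assoc, x1_x0pow, mul_assoc, map_mul, shiftM_xM]

lemma zcount_x1_mul (m : ThompsonM) : zcount (xM 1 * m) = zcount m := by
  rw [x1_mul_decomp, zcount_mk]

lemma rest_x1_mul (m : ThompsonM) : rest (xM 1 * m) = xM (zcount m) * rest m := by
  rw [x1_mul_decomp, rest_mk]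

/-- φ(m) · x₀ = x₀ · φ(φ(m)) -/
lemma shiftM_mul_x0 (m : ThompsonM) :
    shiftM m * xM 0 = xM 0 * shiftM (shiftM m) := by
  induction m using Con.induction_on with
  | _ w =>
    induction w using FreeMonoid.recOn with
    | one =>
      show shiftM 1 * xM 0 = xM 0 * shiftM (shiftM 1)
      simp
    | of_mul b xs ih =>
      have hc : ((FreeMonoid.of b * xs : FreeMonoid ℕ) : ThompsonM) = xM b * (xs : ThompsonM) := rfl
      rw [hc, map_mul, shiftM_xM, mul_assoc, ih, ← mul_assoc,
        xM_rel (show 0 < b + 1 by omega), map_mul, shiftM_xM, mul_assoc]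

lemma mlen_shiftM (m : ThompsonM) : mlen (shiftM m) = mlen m := by
  rw [mlen_eq_nf_length, nf_shiftM, List.length_map, mlen_eq_nf_length]

lemma xM_mul_injective (b : ℕ) : Function.Injective (fun m : ThompsonM => xM b * m) := by
  intro p q h
  simp only at h
  have h2 : ins b (nf p) = ins b (nf q) := by rw [← nf_xM_mul, ← nf_xM_mul, h]
  have := ins_injective h2
  rw [← toM_nf p, ← toM_nf q, this]

end ThompsonAux
namespace ThompsonAux

open MonoidAlgebra

variable (K : Type*) [Field K]

/-- Component extraction: keep monomials with exactly `a` leading `x₀`'s, strip them and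
unshift. -/
noncomputable def piA (a : ℕ) (u : MonoidAlgebra K ThompsonM) : MonoidAlgebra K ThompsonM :=
  u.coeff.sum fun g c => if zcount g = a then MonoidAlgebra.single (rest g) c else 0

variable {K}

lemma XMa_eq_single (n : ℕ) : XMa K n = MonoidAlgebra.single (xM n) 1 := rfl

@[simp] lemma piA_zero (a : ℕ) : piA K a (0 : MonoidAlgebra K ThompsonM) = 0 := by
  simp [piA]

lemma piA_single (a : ℕ) (m : ThompsonM) (c : K) :
    piA K a (MonoidAlgebra.single m c) =
      if zcount m = a then MonoidAlgebra.single (rest m) c else 0 := by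
  rw [piA, MonoidAlgebra.coeff_single, Finsupp.sum_single_index]
  split <;> simp

lemma piA_add (a : ℕ) (u v : MonoidAlgebra K ThompsonM) :
    piA K a (u + v) = piA K a u + piA K a v := by
  classical
  rw [piA, piA, piA, MonoidAlgebra.coeff_add, Finsupp.sum_add_index]
  · intro g _
    split <;> simp
  · intro g _ c1 c2
    split <;> simp [Finsupp.single_add]

lemma piA_neg (a : ℕ) (u : MonoidAlgebra K ThompsonM) : piA K a (-u) = -piA K a u := by
  have h := piA_add a u (-u)
  rw [add_neg_cancel, piA_zero] at h
  exact eq_neg_of_add_eq_zero_right h.symm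

lemma piA_sub (a : ℕ) (u v : MonoidAlgebra K ThompsonM) :
    piA K a (u - v) = piA K a u - piA K a v := by
  rw [sub_eq_add_neg, piA_add, piA_neg, sub_eq_add_neg]

/-- Support description of `piA`. -/
lemma piA_support {a : ℕ} {u : MonoidAlgebra K ThompsonM} {g' : ThompsonM}
    (hg : g' ∈ (piA K a u).coeff.support) : ∃ g ∈ u.coeff.support, zcount g = a ∧ rest g = g' := by
  classical
  rw [piA, MonoidAlgebra.coeff_finsuppSum] at hg
  have := Finsupp.support_sum hg
  rcases Finset.mem_biUnion.1 this with ⟨g, hgm, hg2⟩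
  refine ⟨g, hgm, ?_⟩
  by_cases h : zcount g = a
  · rw [if_pos h] at hg2
    rw [MonoidAlgebra.coeff_single] at hg2
    have := Finsupp.support_single_subset hg2
    rcases Finset.mem_singleton.1 this with rfl
    exact ⟨h, rfl⟩
  · rw [if_neg h] at hg2
    simp at hg2

lemma mlen_le_mdeg {u : MonoidAlgebra K ThompsonM} {g : ThompsonM} (hg : g ∈ u.coeff.support) :
    mlen g ≤ mdeg u := Finset.le_sup hg

lemma piA_support_mlen {a : ℕ} {u : MonoidAlgebra K ThompsonM} {g' : ThompsonM}
    (hg : g' ∈ (piA K a u).coeff.support) : mlen g' + a ≤ mdeg u := by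
  rcases piA_support hg with ⟨g, hgm, hz, hr⟩
  have h1 : mlen g ≤ mdeg u := mlen_le_mdeg hgm
  have h2 := zcount_add_mlen_rest g
  rw [hr, hz] at h2
  omega

lemma piA_eq_zero_of_lt {a : ℕ} {u : MonoidAlgebra K ThompsonM} (h : mdeg u < a) :
    piA K a u = 0 := by
  rw [← MonoidAlgebra.coeff_eq_zero, ← Finsupp.support_eq_empty, Finset.eq_empty_iff_forall_notMem]
  intro g' hg'
  have := piA_support_mlen hg'
  omega

lemma X0_mul_single (m : ThompsonM) (c : K) :
    XMa K 0 * MonoidAlgebra.single m c = MonoidAlgebra.single (xM 0 * m) c := by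
  rw [XMa_eq_single, MonoidAlgebra.single_mul_single, one_mul]

lemma piA_X0_mul_succ (a : ℕ) (u : MonoidAlgebra K ThompsonM) :
    piA K (a + 1) (XMa K 0 * u) = piA K a u := by
  induction u using MonoidAlgebra.induction_linear with
  | zero => simp
  | add f g hf hg => rw [mul_add, piA_add, piA_add, hf, hg]
  | single m c =>
    rw [X0_mul_single, piA_single, piA_single, zcount_x0_mul, rest_x0_mul]
    by_cases h : zcount m = a
    · rw [if_pos (by omega), if_pos h]
    · rw [if_neg (by omega), if_neg h]

lemma piA_X0_mul_zero (u : MonoidAlgebra K ThompsonM) :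
    piA K 0 (XMa K 0 * u) = 0 := by
  induction u using MonoidAlgebra.induction_linear with
  | zero => simp
  | add f g hf hg => rw [mul_add, piA_add, hf, hg, add_zero]
  | single m c =>
    rw [X0_mul_single, piA_single, zcount_x0_mul, if_neg (by omega)]

lemma X1_mul_single (m : ThompsonM) (c : K) :
    XMa K 1 * MonoidAlgebra.single m c = MonoidAlgebra.single (xM 1 * m) c := by
  rw [XMa_eq_single, MonoidAlgebra.single_mul_single, one_mul]

lemma piA_X1_mul (a : ℕ) (u : MonoidAlgebra K ThompsonM) :
    piA K a (XMa K 1 * u) = XMa K a * piA K a u := by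
  induction u using MonoidAlgebra.induction_linear with
  | zero => simp
  | add f g hf hg => rw [mul_add, piA_add, piA_add, hf, hg, mul_add]
  | single m c =>
    rw [X1_mul_single, piA_single, piA_single, zcount_x1_mul, rest_x1_mul]
    by_cases h : zcount m = a
    · rw [if_pos h, if_pos h, XMa_eq_single, MonoidAlgebra.single_mul_single, one_mul, h]
    · rw [if_neg h, if_neg h, mul_zero]

lemma shiftA_single (m : ThompsonM) (c : K) :
    shiftA K (MonoidAlgebra.single m c) = MonoidAlgebra.single (shiftM m) c := by
  show MonoidAlgebra.mapDomain shiftM (MonoidAlgebra.single m c) = _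
  exact MonoidAlgebra.mapDomain_single

lemma shiftA_X (n : ℕ) : shiftA K (XMa K n) = XMa K (n + 1) := by
  rw [XMa_eq_single, shiftA_single, shiftM_xM, XMa_eq_single]

lemma X0pow_eq_single (e : ℕ) : (XMa K 0) ^ e = MonoidAlgebra.single (xM 0 ^ e) 1 := by
  induction e with
  | zero => simp [MonoidAlgebra.one_def]
  | succ n ih => rw [pow_succ, ih, XMa_eq_single, MonoidAlgebra.single_mul_single, mul_one,
      pow_succ]

lemma piA_X0pow_shiftA (a e : ℕ) (q : MonoidAlgebra K ThompsonM) :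
    piA K a ((XMa K 0) ^ e * shiftA K q) = if a = e then q else 0 := by
  induction q using MonoidAlgebra.induction_linear with
  | zero =>
    rw [map_zero, mul_zero, piA_zero]
    split <;> rfl
  | add f g hf hg =>
    rw [map_add, mul_add, piA_add, hf, hg]
    split <;> simp
  | single m c =>
    rw [shiftA_single, X0pow_eq_single, MonoidAlgebra.single_mul_single, one_mul,
      piA_single, zcount_mk, rest_mk]
    by_cases h : a = e
    · rw [if_pos h.symm, if_pos h]
    · rw [if_neg (fun hh => h hh.symm), if_neg h]

lemma sum_piA_filter (B : ℕ) (u : MonoidAlgebra K ThompsonM) :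
    ∑ a ∈ Finset.range B, (XMa K 0) ^ a * shiftA K (piA K a u) =
      MonoidAlgebra.ofCoeff (u.coeff.filter (fun g => zcount g < B)) := by
  classical
  induction u using MonoidAlgebra.induction_linear with
  | zero => simp [Finsupp.filter_zero]
  | add f g hf hg =>
    rw [MonoidAlgebra.coeff_add, Finsupp.filter_add, MonoidAlgebra.ofCoeff_add, ← hf, ← hg, ← Finset.sum_add_distrib]
    congr 1
    funext a
    rw [piA_add, map_add, mul_add]
  | single m c =>
    by_cases h : zcount m < B
    · rw [MonoidAlgebra.coeff_single, Finsupp.filter_single_of_pos (fun g => zcount g < B) h]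
      rw [Finset.sum_eq_single (zcount m)]
      · rw [piA_single, if_pos rfl, shiftA_single, X0pow_eq_single,
          MonoidAlgebra.single_mul_single, one_mul, decomp]
        rfl
      · intro b _ hb
        rw [piA_single, if_neg (fun hh => hb hh.symm), map_zero, mul_zero]
      · intro hm
        exact absurd (Finset.mem_range.2 h) hm
    · rw [MonoidAlgebra.coeff_single, Finsupp.filter_single_of_neg (fun g => zcount g < B) h,
        MonoidAlgebra.ofCoeff_zero]
      apply Finset.sum_eq_zero
      intro a ha
      rw [piA_single, if_neg, map_zero, mul_zero]
      intro hz
      exact h (hz ▸ Finset.mem_range.1 ha)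

lemma sum_piA {B : ℕ} {u : MonoidAlgebra K ThompsonM}
    (hB : ∀ g ∈ u.coeff.support, zcount g < B) :
    ∑ a ∈ Finset.range B, (XMa K 0) ^ a * shiftA K (piA K a u) = u := by
  classical
  rw [sum_piA_filter, ← MonoidAlgebra.coeff_inj, MonoidAlgebra.coeff_ofCoeff,
    Finsupp.filter_eq_self_iff]
  intro g hg
  exact hB g (Finsupp.mem_support_iff.2 hg)

/-- `X_b · u` as a `mapDomain`. -/
lemma X_mul_eq_mapDomain (b : ℕ) (u : MonoidAlgebra K ThompsonM) :
    XMa K b * u = MonoidAlgebra.mapDomain (fun g => xM b * g) u := by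
  induction u using MonoidAlgebra.induction_linear with
  | zero => simp
  | add f g hf hg => rw [mul_add, hf, hg, MonoidAlgebra.mapDomain_add]
  | single m c =>
    rw [XMa_eq_single, MonoidAlgebra.single_mul_single, one_mul, MonoidAlgebra.mapDomain_single]

lemma X_mul_apply (b : ℕ) (u : MonoidAlgebra K ThompsonM) (g : ThompsonM) :
    (XMa K b * u).coeff (xM b * g) = u.coeff g := by
  rw [X_mul_eq_mapDomain]
  exact Finsupp.mapDomain_apply (xM_mul_injective b) u.coeff g

lemma mdeg_support_le {u : MonoidAlgebra K ThompsonM} {D : ℕ}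
    (h : ∀ g ∈ u.coeff.support, mlen g ≤ D) : mdeg u ≤ D := Finset.sup_le h

/-- Exact top-degree behaviour of `(1 - X_b) * u`. -/
lemma one_sub_X_mul_spec (b : ℕ) {u : MonoidAlgebra K ThompsonM} (hu : u ≠ 0) :
    (1 - XMa K b) * u ≠ 0 ∧ mdeg ((1 - XMa K b) * u) = mdeg u + 1 := by
  classical
  obtain ⟨g0, hg0, hsup⟩ := Finset.exists_mem_eq_sup u.coeff.support
    (Finsupp.support_nonempty_iff.2 (mt MonoidAlgebra.coeff_eq_zero.1 hu)) mlen
  set D := mdeg u with hD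
  have hg0len : mlen g0 = D := hsup.symm
  set w := (1 - XMa K b) * u with hw
  have hcoeff : w.coeff (xM b * g0) = - u.coeff g0 := by
    rw [hw, sub_mul, one_mul]
    have h1 : u.coeff (xM b * g0) = 0 := by
      apply Finsupp.notMem_support_iff.1
      intro hmem
      have := mlen_le_mdeg hmem
      rw [mlen_mul, mlen_xM] at this
      omega
    rw [MonoidAlgebra.coeff_sub, Finsupp.sub_apply, h1, X_mul_apply, zero_sub]
  have hne : w.coeff (xM b * g0) ≠ 0 := by
    rw [hcoeff, neg_ne_zero]
    exact Finsupp.mem_support_iff.1 hg0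
  have hmem : (xM b * g0) ∈ w.coeff.support := Finsupp.mem_support_iff.2 hne
  constructor
  · intro h0
    rw [h0] at hmem
    simp at hmem
  · apply le_antisymm
    · apply mdeg_support_le
      intro g hg
      have hsub : w.coeff.support ⊆ u.coeff.support ∪ (XMa K b * u).coeff.support := by
        rw [hw, sub_mul, one_mul, MonoidAlgebra.coeff_sub]
        exact Finsupp.support_sub
      rcases Finset.mem_union.1 (hsub hg) with h | h
      · have := mlen_le_mdeg h; omega
      · rw [X_mul_eq_mapDomain] at h
        have := Finsupp.mapDomain_support (f := fun g => xM b * g) (s := u.coeff) h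
        rcases Finset.mem_image.1 this with ⟨t, ht, rfl⟩
        rw [mlen_mul, mlen_xM]
        have := mlen_le_mdeg ht
        omega
    · have := mlen_le_mdeg hmem
      rw [mlen_mul, mlen_xM] at this
      omega

lemma one_sub_X_cancel {b : ℕ} {u : MonoidAlgebra K ThompsonM}
    (h : (1 - XMa K b) * u = 0) : u = 0 := by
  by_contra hu
  exact (one_sub_X_mul_spec b hu).1 h

/-- Support bound for products with `1 - X_b`. -/
lemma support_one_sub_X_mul {b : ℕ} {w : MonoidAlgebra K ThompsonM} {g : ThompsonM}
    (hg : g ∈ ((1 - XMa K b) * w).coeff.support) : ∃ t ∈ w.coeff.support, mlen g ≤ mlen t + 1 := by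
  classical
  have hsub : ((1 - XMa K b) * w).coeff.support ⊆ w.coeff.support ∪ (XMa K b * w).coeff.support := by
    rw [sub_mul, one_mul, MonoidAlgebra.coeff_sub]
    exact Finsupp.support_sub
  rcases Finset.mem_union.1 (hsub hg) with h | h
  · exact ⟨g, h, by omega⟩
  · rw [X_mul_eq_mapDomain] at h
    have := Finsupp.mapDomain_support (f := fun g => xM b * g) (s := w.coeff) h
    rcases Finset.mem_image.1 this with ⟨t, ht, rfl⟩
    exact ⟨t, ht, by rw [mlen_mul, mlen_xM]; omega⟩

lemma support_X_mul {b : ℕ} {w : MonoidAlgebra K ThompsonM} {g : ThompsonM}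
    (hg : g ∈ (XMa K b * w).coeff.support) : ∃ t ∈ w.coeff.support, mlen g ≤ mlen t + 1 := by
  classical
  rw [X_mul_eq_mapDomain] at hg
  have := Finsupp.mapDomain_support (f := fun g => xM b * g) (s := w.coeff) hg
  rcases Finset.mem_image.1 this with ⟨t, ht, rfl⟩
  exact ⟨t, ht, by rw [mlen_mul, mlen_xM]; omega⟩

/-- Iterated shift. -/
noncomputable def phiIt (e : ℕ) (z : MonoidAlgebra K ThompsonM) : MonoidAlgebra K ThompsonM :=
  (fun w => shiftA K w)^[e] z

@[simp] lemma phiIt_zero (z : MonoidAlgebra K ThompsonM) : phiIt 0 z = z := rfl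

lemma phiIt_succ (e : ℕ) (z : MonoidAlgebra K ThompsonM) :
    phiIt (e + 1) z = phiIt e (shiftA K z) := by
  rw [phiIt, phiIt, Function.iterate_succ_apply]

lemma phiIt_succ' (e : ℕ) (z : MonoidAlgebra K ThompsonM) :
    phiIt (e + 1) z = shiftA K (phiIt e z) := by
  rw [phiIt, phiIt, Function.iterate_succ_apply']

lemma phiIt_mul (e : ℕ) (z w : MonoidAlgebra K ThompsonM) :
    phiIt e (z * w) = phiIt e z * phiIt e w := by
  induction e generalizing z w with
  | zero => simp
  | succ n ih => rw [phiIt_succ, phiIt_succ, phiIt_succ, map_mul, ih]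

lemma phiIt_one (e : ℕ) : phiIt e (1 : MonoidAlgebra K ThompsonM) = 1 := by
  induction e with
  | zero => rfl
  | succ n ih => rw [phiIt_succ, map_one, ih]

lemma phiIt_sub (e : ℕ) (z w : MonoidAlgebra K ThompsonM) :
    phiIt e (z - w) = phiIt e z - phiIt e w := by
  induction e generalizing z w with
  | zero => simp
  | succ n ih => rw [phiIt_succ, phiIt_succ, phiIt_succ, map_sub, ih]

lemma phiIt_X (e i : ℕ) : phiIt e (XMa K i) = XMa K (i + e) := by
  induction e generalizing i with
  | zero => rfl
  | succ n ih =>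
    rw [phiIt_succ, shiftA_X, ih]
    congr 1
    omega

/-- `φ(z) · X₀ = X₀ · φ(φ(z))`. -/
lemma shiftA_mul_X0 (z : MonoidAlgebra K ThompsonM) :
    shiftA K z * XMa K 0 = XMa K 0 * shiftA K (shiftA K z) := by
  induction z using MonoidAlgebra.induction_linear with
  | zero => simp
  | add f g hf hg => simp only [map_add, add_mul, hf, hg, mul_add]
  | single m c =>
    rw [shiftA_single, XMa_eq_single, MonoidAlgebra.single_mul_single, mul_one,
      shiftM_mul_x0, shiftA_single, MonoidAlgebra.single_mul_single, one_mul]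

lemma shiftA_mul_X0pow (e : ℕ) (z : MonoidAlgebra K ThompsonM) :
    shiftA K z * (XMa K 0) ^ e = (XMa K 0) ^ e * shiftA K (phiIt e z) := by
  induction e generalizing z with
  | zero => simp
  | succ n ih =>
    rw [pow_succ', ← mul_assoc, shiftA_mul_X0, mul_assoc, ih, ← mul_assoc, ← pow_succ',
      ← phiIt_succ]

/-- Everything is in `Msub 0`. -/
lemma mem_Msub_zero (g : ThompsonM) : g ∈ Msub 0 := by
  induction g using Con.induction_on with
  | _ w =>
    induction w using FreeMonoid.recOn with
    | one => exact Submonoid.one_mem _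
    | of_mul b xs ih =>
      have hc : ((FreeMonoid.of b * xs : FreeMonoid ℕ) : ThompsonM) = xM b * (xs : ThompsonM) := rfl
      rw [hc]
      exact Submonoid.mul_mem _ (Submonoid.subset_closure ⟨b, Nat.zero_le b, rfl⟩) ih

lemma shiftM_mem_Msub {i : ℕ} {g : ThompsonM} (hg : g ∈ Msub i) :
    shiftM g ∈ Msub (i + 1) := by
  induction hg using Submonoid.closure_induction with
  | mem x hx =>
    rcases hx with ⟨n, hn, rfl⟩
    rw [shiftM_xM]
    exact Submonoid.subset_closure ⟨n + 1, by omega, rfl⟩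
  | one => rw [map_one]; exact Submonoid.one_mem _
  | mul x y _ _ hx hy => rw [map_mul]; exact Submonoid.mul_mem _ hx hy

lemma shiftA_support {u : MonoidAlgebra K ThompsonM} {g : ThompsonM}
    (hg : g ∈ (shiftA K u).coeff.support) : ∃ t ∈ u.coeff.support, g = shiftM t := by
  classical
  have : (shiftA K u).coeff.support ⊆ u.coeff.support.image shiftM := by
    show (Finsupp.mapDomain shiftM u.coeff).support ⊆ _
    exact Finsupp.mapDomain_support
  rcases Finset.mem_image.1 (this hg) with ⟨t, ht, rfl⟩
  exact ⟨t, ht, rfl⟩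

end ThompsonAux
namespace ThompsonAux

open MonoidAlgebra

variable {K : Type*} [Field K]

/-- The canonical generating solutions `u_k`. -/
noncomputable def UU (K : Type*) [Field K] : ℕ → MonoidAlgebra K ThompsonM
  | 0 => (1 + XMa K 0 - XMa K 1) * (1 - XMa K 3)
  | k+1 => (1 - XMa K 1) * shiftA K (UU K k)

/-- Backwards recursion producing the coefficients `r_n`. -/
noncomputable def rAux (K : Type*) [Field K] (vc : ℕ → MonoidAlgebra K ThompsonM) (N : ℕ) :
    ℕ → MonoidAlgebra K ThompsonM
  | m =>
    if _h : N - 1 ≤ m then 0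
    else (1 - XMa K (m+4)) * rAux K vc N (m+2) + XMa K (m+1) * rAux K vc N (m+1) - vc (m+2)
  termination_by m => N - 1 - m
  decreasing_by all_goals omega

lemma rAux_ge (vc : ℕ → MonoidAlgebra K ThompsonM) {N m : ℕ} (h : N - 1 ≤ m) :
    rAux K vc N m = 0 := by
  rw [rAux, dif_pos h]

lemma rAux_lt (vc : ℕ → MonoidAlgebra K ThompsonM) {N m : ℕ} (h : m < N - 1) :
    rAux K vc N m = (1 - XMa K (m+4)) * rAux K vc N (m+2)
      + XMa K (m+1) * rAux K vc N (m+1) - vc (m+2) := by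
  rw [rAux, dif_neg (by omega)]

lemma XrelA {i j : ℕ} (h : i < j) : XMa K j * XMa K i = XMa K i * XMa K (j+1) := by
  simp only [XMa_eq_single, MonoidAlgebra.single_mul_single, one_mul, xM_rel h]

lemma keyId' (n : ℕ) :
    XMa K (n+1) * XMa K (n+3) = XMa K (n+2) * XMa K (n+1) := by
  have h := XrelA (show n + 1 < n + 2 by omega) (K := K)
  rw [show n + 2 + 1 = n + 3 from rfl] at h
  exact h.symm

lemma keyId (n : ℕ) :
    XMa K (n+1) * (1 - XMa K (n+3)) = (1 - XMa K (n+2)) * XMa K (n+1) := by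
  rw [mul_sub, sub_mul, mul_one, one_mul, keyId' n]

end ThompsonAux
namespace ThompsonAux

open MonoidAlgebra

variable {K : Type*} [Field K]

lemma piA_sum (a : ℕ) {ι : Type*} (s : Finset ι) (f : ι → MonoidAlgebra K ThompsonM) :
    piA K a (∑ i ∈ s, f i) = ∑ i ∈ s, piA K a (f i) := by
  classical
  induction s using Finset.induction_on with
  | empty => simp
  | insert _ _ hns ih =>
    rw [Finset.sum_insert hns, Finset.sum_insert hns, piA_add, ih]

lemma piA_shiftA (a : ℕ) (q : MonoidAlgebra K ThompsonM) :
    piA K a (shiftA K q) = if a = 0 then q else 0 := by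
  have h := piA_X0pow_shiftA a 0 q
  rwa [pow_zero, one_mul] at h

/-- The fundamental identity `(1-x₀)·u₀ = (1-x₁)·v₀`. -/
lemma hKey : (1 - XMa K 0) * ((1 + XMa K 0 - XMa K 1) * (1 - XMa K 3)) =
    (1 - XMa K 1) * ((1 - XMa K 3) - XMa K 0 * (XMa K 0 - XMa K 1)) := by
  have e1 : XMa K 1 * (XMa K 0 * XMa K 0) = XMa K 0 * (XMa K 0 * XMa K 3) := by
    rw [← mul_assoc, XrelA (show (0:ℕ) < 1 by omega), mul_assoc,
      XrelA (show (0:ℕ) < 2 by omega)]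
  have e2 : XMa K 1 * (XMa K 0 * XMa K 1) = XMa K 0 * (XMa K 1 * XMa K 3) := by
    rw [← mul_assoc, XrelA (show (0:ℕ) < 1 by omega), mul_assoc,
      XrelA (show (1:ℕ) < 2 by omega)]
  have lhs_eq : (1 - XMa K 0) * ((1 + XMa K 0 - XMa K 1) * (1 - XMa K 3)) =
      1 - XMa K 1 - XMa K 0 * XMa K 0 + XMa K 0 * XMa K 1 - XMa K 3 + XMa K 1 * XMa K 3
        + (XMa K 0 * XMa K 0) * XMa K 3 - (XMa K 0 * XMa K 1) * XMa K 3 := by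
    noncomm_ring
  have rhs_eq : (1 - XMa K 1) * ((1 - XMa K 3) - XMa K 0 * (XMa K 0 - XMa K 1)) =
      1 - XMa K 3 - XMa K 0 * XMa K 0 + XMa K 0 * XMa K 1 - XMa K 1 + XMa K 1 * XMa K 3
        + XMa K 1 * (XMa K 0 * XMa K 0) - XMa K 1 * (XMa K 0 * XMa K 1) := by
    noncomm_ring
  rw [lhs_eq, rhs_eq, e1, e2]
  noncomm_ring

/-- Decomposition of `u₀` into graded components. -/
lemma hU0split : (1 + XMa K 0 - XMa K 1) * (1 - XMa K 3) =
    shiftA K ((1 - XMa K 0) * (1 - XMa K 2)) + XMa K 0 * shiftA K (1 - XMa K 2) := by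
  have h1 : shiftA K ((1 - XMa K 0) * (1 - XMa K 2)) =
      (1 - XMa K 1) * (1 - XMa K 3) := by
    rw [map_mul, map_sub, map_sub, map_one, shiftA_X, shiftA_X]
  have h2 : shiftA K (1 - XMa K 2) = 1 - XMa K 3 := by
    rw [map_sub, map_one, shiftA_X]
  rw [h1, h2]
  noncomm_ring

lemma phiIt_c0 (e : ℕ) :
    phiIt e ((1 - XMa K 0) * (1 - XMa K 2)) = (1 - XMa K e) * (1 - XMa K (e+2)) := by
  rw [phiIt_mul, phiIt_sub, phiIt_sub, phiIt_one, phiIt_X, phiIt_X]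
  rw [show 0 + e = e by omega, show 2 + e = e + 2 by omega]

lemma phiIt_c1 (e : ℕ) : phiIt e (1 - XMa K 2 : MonoidAlgebra K ThompsonM) = 1 - XMa K (e+2) := by
  rw [phiIt_sub, phiIt_one, phiIt_X, show 2 + e = e + 2 by omega]

end ThompsonAux
namespace ThompsonAux

open MonoidAlgebra

variable {K : Type*} [Field K]

lemma UU_zero : UU K 0 = (1 + XMa K 0 - XMa K 1) * (1 - XMa K 3) := by rw [UU]

lemma UU_succ (k : ℕ) : UU K (k + 1) = (1 - XMa K 1) * shiftA K (UU K k) := by rw [UU]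

set_option maxHeartbeats 1000000 in
theorem solve (K : Type*) [Field K] :
    ∀ D : ℕ, ∀ u v : MonoidAlgebra K ThompsonM, mdeg u ≤ D →
      (1 - XMa K 0) * u = (1 - XMa K 1) * v →
      ∃ (k : ℕ) (r : ℕ → MonoidAlgebra K ThompsonM),
        (∀ i ≤ k, ∀ g ∈ (r i).coeff.support, g ∈ Msub i) ∧
        u = ∑ i ∈ Finset.range (k + 1), UU K i * r i := by
  intro D
  induction D using Nat.strong_induction_on with
  | _ D IH =>
  intro u v hD heq
  classical
  by_cases hu0 : u = 0
  · refine ⟨0, fun _ => 0, ?_, ?_⟩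
    · intro i _ g hg; simp at hg
    · simp [hu0]
  set D0 := mdeg u with hD0def
  -- v's support bound
  have hvsup : ∀ g ∈ v.coeff.support, mlen g ≤ D0 := by
    by_cases hv0 : v = 0
    · simp [hv0]
    · intro g hg
      have h1 := (one_sub_X_mul_spec 0 hu0).2
      have h2 := (one_sub_X_mul_spec 1 hv0).2
      rw [heq, h2] at h1
      have := mlen_le_mdeg hg
      omega
  -- component equations
  have E0 : piA K 0 u = (1 - XMa K 0) * piA K 0 v := by
    have h := congrArg (piA K 0) heq
    rw [sub_mul, one_mul, piA_sub, piA_X0_mul_zero, sub_zero,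
      sub_mul, one_mul, piA_sub, piA_X1_mul] at h
    rw [h, sub_mul, one_mul]
  have Ea : ∀ a : ℕ, piA K (a+1) u - piA K a u = (1 - XMa K (a+1)) * piA K (a+1) v := by
    intro a
    have h := congrArg (piA K (a+1)) heq
    rw [sub_mul, one_mul, piA_sub, piA_X0_mul_succ,
      sub_mul, one_mul, piA_sub, piA_X1_mul] at h
    rw [h, sub_mul, one_mul]
  set N := D0 + 1 with hNdef
  set r := rAux K (fun b => piA K b v) N with hrdef
  have hr_ge : ∀ m, N - 1 ≤ m → r m = 0 := fun m hm => rAux_ge _ hm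
  have hr_lt : ∀ m, m < N - 1 →
      r m = (1 - XMa K (m+4)) * r (m+2) + XMa K (m+1) * r (m+1) - piA K (m+2) v :=
    fun m hm => rAux_lt _ hm
  have hu_hi : ∀ a, D0 < a → piA K a u = 0 := fun a ha => piA_eq_zero_of_lt ha
  have hv_hi : ∀ a, D0 < a → piA K a v = 0 := by
    intro a ha
    rw [← MonoidAlgebra.coeff_eq_zero, ← Finsupp.support_eq_empty, Finset.eq_empty_iff_forall_notMem]
    intro g hg
    rcases piA_support hg with ⟨G, hG, hzc, hrest⟩
    have h1 := hvsup G hG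
    have h2 := zcount_le_mlen G
    omega
  -- invariant P
  have Pbase : ∀ n, N - 1 ≤ n → (1 - XMa K (n+2)) * r n =
      piA K (n+1) u - (1 - XMa K (n+1)) * ((1 - XMa K (n+3)) * r (n+1)) := by
    intro n hn
    rw [hr_ge n hn, hr_ge (n+1) (by omega), hu_hi (n+1) (by omega)]
    simp
  have Pm : ∀ t n, N - 1 - n ≤ t → (1 - XMa K (n+2)) * r n =
      piA K (n+1) u - (1 - XMa K (n+1)) * ((1 - XMa K (n+3)) * r (n+1)) := by
    intro t
    induction t with
    | zero => intro n hn; exact Pbase n (by omega)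
    | succ t iht =>
      intro n hn
      by_cases hc : N - 1 ≤ n
      · exact Pbase n hc
      · have hP1 := iht (n+1) (by omega)
        have hB := sub_eq_iff_eq_add.mp (Ea (n+1))
        rw [hB] at hP1
        have hU1 : piA K (n+1) u = (1 - XMa K (n+3)) * r (n+1)
            + (1 - XMa K (n+2)) * ((1 - XMa K (n+4)) * r (n+2))
            - (1 - XMa K (n+2)) * piA K (n+2) v := by
          rw [hP1]; abel
        rw [hU1, hr_lt n (by omega)]
        have hkb : (1 - XMa K (n+2)) * (XMa K (n+1) * r (n+1))
            = XMa K (n+1) * ((1 - XMa K (n+3)) * r (n+1)) := by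
          rw [← mul_assoc, ← keyId n, mul_assoc]
        rw [mul_sub, mul_add, hkb,
          sub_mul 1 (XMa K (n+1)) ((1 - XMa K (n+3)) * r (n+1)), one_mul]
        abel
  have P : ∀ n, (1 - XMa K (n+2)) * r n =
      piA K (n+1) u - (1 - XMa K (n+1)) * ((1 - XMa K (n+3)) * r (n+1)) :=
    fun n => Pm (N - 1 - n) n le_rfl
  -- invariant J (degree bound)
  have Jbase : ∀ n, N - 1 ≤ n → ∀ g ∈ (r n).coeff.support, mlen g + n + 2 ≤ D0 := by
    intro n hn g hg
    rw [hr_ge n hn] at hg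
    simp at hg
  have Jm : ∀ t n, N - 1 - n ≤ t → ∀ g ∈ (r n).coeff.support, mlen g + n + 2 ≤ D0 := by
    intro t
    induction t with
    | zero => intro n hn; exact Jbase n (by omega)
    | succ t iht =>
      intro n hn
      by_cases hc : N - 1 ≤ n
      · exact Jbase n hc
      · intro g hg
        rw [hr_lt n (by omega), MonoidAlgebra.coeff_sub] at hg
        rcases Finset.mem_union.1 (Finsupp.support_sub hg) with h | h
        · rw [MonoidAlgebra.coeff_add] at h
          rcases Finset.mem_union.1 (Finsupp.support_add h) with h2 | h2
          · rcases support_one_sub_X_mul h2 with ⟨t2, ht2, hlen⟩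
            have := iht (n+2) (by omega) t2 ht2
            omega
          · rcases support_X_mul h2 with ⟨t2, ht2, hlen⟩
            have := iht (n+1) (by omega) t2 ht2
            omega
        · rcases piA_support h with ⟨G, hG, hzc, hrest⟩
          have h1 := hvsup G hG
          have h2 := zcount_add_mlen_rest G
          rw [hrest] at h2
          omega
  have J : ∀ n, ∀ g ∈ (r n).coeff.support, mlen g + n + 2 ≤ D0 :=
    fun n => Jm (N - 1 - n) n le_rfl
  -- the element R and components of U0ex * R
  set U0ex := (1 + XMa K 0 - XMa K 1) * (1 - XMa K 3) with hU0ex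
  set R := ∑ e ∈ Finset.range N, (XMa K 0)^e * shiftA K (r e) with hRdef
  have hterm : ∀ e : ℕ, U0ex * ((XMa K 0)^e * shiftA K (r e))
      = (XMa K 0)^e * shiftA K ((1 - XMa K e) * ((1 - XMa K (e+2)) * r e))
        + (XMa K 0)^(e+1) * shiftA K ((1 - XMa K (e+2)) * r e) := by
    intro e
    rw [hU0ex, hU0split, add_mul]
    congr 1
    · rw [← mul_assoc, shiftA_mul_X0pow, mul_assoc, ← map_mul, phiIt_c0, mul_assoc]
    · rw [mul_assoc, ← mul_assoc (shiftA K (1 - XMa K 2)), shiftA_mul_X0pow, phiIt_c1,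
        mul_assoc (XMa K 0 ^ e), ← map_mul, ← mul_assoc, ← pow_succ']
  have hcomp : ∀ a : ℕ, piA K a (U0ex * R)
      = (∑ e ∈ Finset.range N,
          if a = e then (1 - XMa K e) * ((1 - XMa K (e+2)) * r e) else 0)
        + (∑ e ∈ Finset.range N, if a = e + 1 then (1 - XMa K (e+2)) * r e else 0) := by
    intro a
    rw [hRdef, Finset.mul_sum, piA_sum]
    rw [Finset.sum_congr rfl (fun e _ => by
      rw [hterm e, piA_add, piA_X0pow_shiftA, piA_X0pow_shiftA])]
    rw [Finset.sum_add_distrib]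
  have hcomp0 : piA K 0 (U0ex * R) = (1 - XMa K 0) * ((1 - XMa K 2) * r 0) := by
    rw [hcomp 0, Finset.sum_ite_eq, if_pos (Finset.mem_range.2 (by omega)),
      Finset.sum_eq_zero (fun e _ => by rw [if_neg (by omega)]), add_zero]
  have hcompS : ∀ b : ℕ, piA K (b+1) (U0ex * R)
      = (1 - XMa K (b+1)) * ((1 - XMa K (b+3)) * r (b+1)) + (1 - XMa K (b+2)) * r b := by
    intro b
    have hsum2 : (∑ e ∈ Finset.range N,
          if b + 1 = e + 1 then (1 - XMa K (e+2)) * r e else 0)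
        = ∑ e ∈ Finset.range N, if b = e then (1 - XMa K (e+2)) * r e else 0 :=
      Finset.sum_congr rfl (fun e _ => by
        by_cases h : b = e
        · rw [if_pos h, if_pos (by omega)]
        · rw [if_neg h, if_neg (by omega)])
    rw [hcomp (b+1), hsum2, Finset.sum_ite_eq, Finset.sum_ite_eq]
    by_cases h1 : b + 1 < N
    · rw [if_pos (Finset.mem_range.2 h1), if_pos (Finset.mem_range.2 (by omega))]
    · have hrb1 : r (b+1) = 0 := hr_ge (b+1) (by omega)
      have hrb : r b = 0 := hr_ge b (by omega)
      rw [hrb1, hrb]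
      simp
  -- components of u - U0ex * R vanish in positive degrees
  have hz_comp : ∀ b : ℕ, piA K (b+1) (u - U0ex * R) = 0 := by
    intro b
    rw [piA_sub, hcompS b, P b]
    abel
  set y := piA K 0 u - (1 - XMa K 0) * ((1 - XMa K 2) * r 0) with hydef
  have hy0 : piA K 0 (u - U0ex * R) = y := by rw [piA_sub, hcomp0]
  have hzdec : u - U0ex * R = shiftA K y := by
    have hsum := sum_piA (B := mdeg (u - U0ex * R) + 1) (u := u - U0ex * R)
      (fun g hg => by
        have h1 := mlen_le_mdeg hg
        have h2 := zcount_le_mlen g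
        omega)
    rw [← hsum, Finset.sum_eq_single 0]
    · rw [pow_zero, one_mul, hy0]
    · intro b _ hb0
      obtain ⟨b', rfl⟩ : ∃ b', b = b' + 1 := ⟨b - 1, by omega⟩
      rw [hz_comp b', map_zero, mul_zero]
    · intro h0
      exact absurd (Finset.mem_range.2 (by omega)) h0
  set w' := piA K 0 v - (1 - XMa K 2) * r 0 with hwdef
  have hyw : y = (1 - XMa K 0) * w' := by
    rw [hydef, hwdef, E0, mul_sub]
  set Vex := (1 - XMa K 3) - XMa K 0 * (XMa K 0 - XMa K 1) with hVdef
  set vt := v - Vex * R with hvtdef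
  have hK2 : (1 - XMa K 0) * U0ex = (1 - XMa K 1) * Vex := by
    rw [hU0ex, hVdef]; exact hKey
  have heq2 : (1 - XMa K 0) * (u - U0ex * R) = (1 - XMa K 1) * vt := by
    rw [hvtdef, mul_sub, mul_sub, heq]
    refine congrArg (HSub.hSub _) ?_
    rw [← mul_assoc, hK2, mul_assoc]
  have hw'eq : (1 - XMa K 0) * w' = (1 - XMa K 1) * (-(piA K 1 vt)) := by
    have h := congrArg (piA K 1) heq2
    rw [hzdec, sub_mul, one_mul, piA_sub, piA_shiftA, piA_X0_mul_succ, piA_shiftA,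
      if_neg (by omega), if_pos rfl, zero_sub,
      sub_mul, one_mul, piA_sub, piA_X1_mul] at h
    have h2 : (1 - XMa K 1) * piA K 1 vt = -y := by
      rw [sub_mul, one_mul]; exact h.symm
    calc (1 - XMa K 0) * w' = y := hyw.symm
      _ = -(-y) := (neg_neg y).symm
      _ = -((1 - XMa K 1) * piA K 1 vt) := by rw [h2]
      _ = (1 - XMa K 1) * (-(piA K 1 vt)) := (mul_neg _ _).symm
  -- conclude
  by_cases hw0 : w' = 0
  · have hy0' : y = 0 := by rw [hyw, hw0, mul_zero]
    have hu : u = U0ex * R := by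
      have := hzdec
      rw [hy0', map_zero, sub_eq_zero] at this
      exact this
    refine ⟨0, fun _ => R, ?_, ?_⟩
    · intro i hi g _
      have hi0 : i = 0 := by omega
      subst hi0
      exact mem_Msub_zero g
    · rw [Finset.sum_range_one, UU_zero, ← hU0ex, hu]
  · have hydeg : mdeg y ≤ D0 := by
      apply mdeg_support_le
      intro g hg
      rw [hydef, MonoidAlgebra.coeff_sub] at hg
      rcases Finset.mem_union.1 (Finsupp.support_sub hg) with h | h
      · exact le_trans (by omega) (piA_support_mlen h)
      · rcases support_one_sub_X_mul h with ⟨t1, ht1, hl1⟩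
        rcases support_one_sub_X_mul ht1 with ⟨t2, ht2, hl2⟩
        have := J 0 t2 ht2
        omega
    have hwD : mdeg w' + 1 ≤ D0 := by
      have := (one_sub_X_mul_spec 0 hw0).2
      rw [← hyw] at this
      omega
    obtain ⟨k', r', hr's, hr'sum⟩ :=
      IH (mdeg w') (by omega) w' (-(piA K 1 vt)) le_rfl hw'eq
    refine ⟨k' + 1, fun i => if i = 0 then R else shiftA K (r' (i - 1)), ?_, ?_⟩
    · intro i hik g hg
      cases i with
      | zero =>
        exact mem_Msub_zero g
      | succ j =>
        have hg' : g ∈ (shiftA K (r' j)).coeff.support := by simpa using hg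
        rcases shiftA_support hg' with ⟨t, ht, rfl⟩
        exact shiftM_mem_Msub (hr's j (by omega) t ht)
    · have hu : u = U0ex * R + (1 - XMa K 1) * shiftA K w' := by
        have h1 : u - U0ex * R = (1 - XMa K 1) * shiftA K w' := by
          rw [hzdec, hyw, map_mul, map_sub, map_one, shiftA_X]
        rw [← h1]; abel
      have hshift : (1 - XMa K 1) * shiftA K w'
          = ∑ i ∈ Finset.range (k' + 1), UU K (i+1) * shiftA K (r' i) := by
        rw [hr'sum, map_sum, Finset.mul_sum]
        refine Finset.sum_congr rfl (fun i _ => ?_)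
        rw [map_mul, UU_succ, mul_assoc]
      rw [Finset.sum_range_succ']
      simp only [Nat.succ_ne_zero, ite_false, ite_true, eq_self_iff_true,
        Nat.add_sub_cancel, if_false, if_true, ↓reduceIte]
      rw [UU_zero, ← hU0ex, ← hshift, hu]
      abel

end ThompsonAux

/-- every solution `(u, v)` of `(1-x_0)u = (1-x_1)v` in `K[M]` has
`u = u_0 r_0 + u_1 r_1 + ⋯ + u_k r_k` for some `k` and `r_i ∈ K[M_i]`, where
`u_0 = (1 + x_0 - x_1)(1 - x_3)` and `u_k = (1-x_1)φ(u_{k-1})`. -/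
theorem stmt15 (K : Type*) [Field K] (U : ℕ → MonoidAlgebra K ThompsonM)
    (hU0 : U 0 = (1 + XMa K 0 - XMa K 1) * (1 - XMa K 3))
    (hU : ∀ k : ℕ, U (k + 1) = (1 - XMa K 1) * shiftA K (U k))
    (u v : MonoidAlgebra K ThompsonM)
    (h : (1 - XMa K 0) * u = (1 - XMa K 1) * v) :
    ∃ (k : ℕ) (r : ℕ → MonoidAlgebra K ThompsonM),
      (∀ i ≤ k, ∀ g ∈ (r i).coeff.support, g ∈ Msub i) ∧
      u = ∑ i ∈ Finset.range (k + 1), U i * r i := by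
  have hUU : ∀ i, U i = ThompsonAux.UU K i := by
    intro i
    induction i with
    | zero => rw [hU0, ThompsonAux.UU_zero]
    | succ n ih => rw [hU n, ThompsonAux.UU_succ, ih]
  obtain ⟨k, r, hsupp, hsum⟩ := ThompsonAux.solve K (mdeg u) u v le_rfl h
  refine ⟨k, r, hsupp, ?_⟩
  rw [hsum]
  exact Finset.sum_congr rfl (fun i _ => by rw [hUU i])
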